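/- arXiv:1502.01073 — 5 statements merged into one kernel-verified Lean document; each statement's English description precedes it below -/
import Mathlib

section
/- For noise covariance Σ_ε with common cross-correlation ρ and variances σ_i², the MAF coefficient vector w = Σ_ε⁻¹b satisfies, up to a positive scalar, w_i = b_i/σ_i² − (ρ/(1+ρ(p−1)))·Σ_{j=1}^p b_j/(σ_i σ_j) for each i. -/
open Matrix

/-- for equicorrelated noise with variances σᵢ², the MAF
coefficient vector w = Σ_ε⁻¹b satisfies, up to a positive scalar,
wᵢ = bᵢ/σᵢ² − (ρ/(1+ρ(p−1)))·Σⱼ bⱼ/(σᵢσⱼ). -/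
theorem maf_coefficients_equicorrelated {p : ℕ} (hp : 0 < p)
    (σ : Fin p → ℝ) (hσ : ∀ i, 0 < σ i)
    (ρ : ℝ) (hρ1 : ρ < 1) (hρ2 : -1 / ((p : ℝ) - 1) < ρ)
    (b : Fin p → ℝ)
    (Sig : Matrix (Fin p) (Fin p) ℝ)
    (hSig : Sig = Matrix.diagonal σ *
        (ρ • Matrix.vecMulVec (fun _ : Fin p => (1 : ℝ)) (fun _ => 1) +
          (1 - ρ) • (1 : Matrix (Fin p) (Fin p) ℝ)) *
      Matrix.diagonal σ) :
    ∃ c : ℝ, 0 < c ∧ ∀ i,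
      (Sig⁻¹ *ᵥ b) i =
        c * (b i / σ i ^ 2 -
          (ρ / (1 + ρ * ((p : ℝ) - 1))) * ∑ j, b j / (σ i * σ j)) := by
  have hσne : ∀ i, σ i ≠ 0 := fun i => (hσ i).ne'
  have hc : (0:ℝ) < 1 - ρ := by linarith
  have hp1 : (1:ℝ) ≤ (p:ℝ) := by exact_mod_cast hp
  have hs : (0:ℝ) < 1 + ρ * ((p : ℝ) - 1) := by
    rcases le_or_gt 0 ρ with h | h
    · nlinarith
    · have hp2 : (0:ℝ) < (p:ℝ) - 1 := by
        rcases eq_or_lt_of_le hp1 with h1 | h1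
        · exfalso
          rw [← h1] at hρ2
          norm_num at hρ2
          linarith
        · linarith
      have := (div_lt_iff₀ hp2).mp hρ2
      nlinarith
  set s : ℝ := 1 + ρ * ((p : ℝ) - 1) with hs_def
  set r : ℝ := ρ / s with hr_def
  have hrs : r * s = ρ := div_mul_cancel₀ _ hs.ne'
  set J : Matrix (Fin p) (Fin p) ℝ :=
    Matrix.vecMulVec (fun _ : Fin p => (1 : ℝ)) (fun _ => 1) with hJ_def
  have hJJ : J * J = (p : ℝ) • J := by
    ext i j
    simp [hJ_def, Matrix.mul_apply, Matrix.vecMulVec_apply, Finset.sum_const,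
      Finset.card_univ]
  set M : Matrix (Fin p) (Fin p) ℝ := ρ • J + (1 - ρ) • 1 with hM_def
  have hMJ : M * J = s • J := by
    rw [hM_def, add_mul, smul_mul_assoc, smul_mul_assoc, hJJ, one_mul,
      smul_smul, ← add_smul]
    congr 1
    ring
  set N : Matrix (Fin p) (Fin p) ℝ :=
    (1 - ρ)⁻¹ • ((1 : Matrix (Fin p) (Fin p) ℝ) - r • J) with hN_def
  have hMN : M * N = 1 := by
    rw [hN_def, Matrix.mul_smul, Matrix.mul_sub, Matrix.mul_one,
      Matrix.mul_smul, hMJ, smul_smul, hrs, hM_def, add_sub_cancel_left,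
      smul_smul, inv_mul_cancel₀ hc.ne', one_smul]
  set D : Matrix (Fin p) (Fin p) ℝ := Matrix.diagonal σ with hD_def
  set Dinv : Matrix (Fin p) (Fin p) ℝ := Matrix.diagonal (fun i => (σ i)⁻¹)
    with hDinv_def
  have hDD : D * Dinv = 1 := by
    rw [hD_def, hDinv_def, Matrix.diagonal_mul_diagonal]
    rw [show (fun i => σ i * (σ i)⁻¹) = fun _ => (1:ℝ) from
      funext fun i => mul_inv_cancel₀ (hσne i), Matrix.diagonal_one]
  set B : Matrix (Fin p) (Fin p) ℝ := Dinv * N * Dinv with hB_def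
  have hSB : Sig * B = 1 := by
    rw [hSig, hB_def]
    calc D * M * D * (Dinv * N * Dinv)
        = D * M * ((D * Dinv) * (N * Dinv)) := by
          noncomm_ring
      _ = D * (M * N) * Dinv := by rw [hDD, one_mul]; noncomm_ring
      _ = 1 := by rw [hMN, Matrix.mul_one, hDD]
  have hinv : Sig⁻¹ = B := Matrix.inv_eq_right_inv hSB
  have hBe : ∀ i j, B i j =
      (1 - ρ)⁻¹ * (((if i = j then (1:ℝ) else 0) - r) * ((σ i)⁻¹ * (σ j)⁻¹)) := by
    intro i j
    rw [hB_def, Matrix.mul_apply]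
    simp [hDinv_def, hN_def, hJ_def, Matrix.diagonal, Matrix.mul_apply,
      Matrix.one_apply, Matrix.vecMulVec_apply, Finset.sum_ite_eq,
      Finset.mul_sum, mul_ite, ite_mul, sub_mul, mul_sub]
    ring
  refine ⟨(1 - ρ)⁻¹, inv_pos.mpr hc, fun i => ?_⟩
  rw [hinv]
  have key : ∀ j, B i j * b j =
      (if j = i then (1 - ρ)⁻¹ * (b i / σ i ^ 2) else 0)
        - (1 - ρ)⁻¹ * (r * (b j / (σ i * σ j))) := by
    intro j
    rw [hBe]
    by_cases h : i = j
    · subst h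
      simp only [if_pos rfl, eq_self_iff_true, if_true]
      field_simp
      try ring
    · rw [if_neg h, if_neg (Ne.symm h)]
      field_simp
      try ring
  rw [Matrix.mulVec, dotProduct]
  simp only [key]
  rw [Finset.sum_sub_distrib, Finset.sum_ite_eq' Finset.univ i
    (fun _ => (1 - ρ)⁻¹ * (b i / σ i ^ 2)), if_pos (Finset.mem_univ i),
    ← Finset.mul_sum, ← Finset.mul_sum]
  ring
end

section
/- The function SNR(ν) = b₁²q(1+νγ)² / [(1−ρ)(1+ν²) + ρq(1+ν)²] attains its maximum over ν ∈ ℝ at ν = (γ(1−ρ+ρq) − ρq)/(1−ρ+ρq − γρq), and attains its minimum value 0 at ν = −1/γ. -/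
set_option maxHeartbeats 1000000

/-- SNR(ν) = b₁²q(1+νγ)²/[(1−ρ)(1+ν²)+ρq(1+ν)²] is maximized
at ν = (γ(1−ρ+ρq) − ρq)/(1−ρ+ρq − γρq) and attains its minimum value 0
at ν = −1/γ. -/
theorem two_group_snr_optimum (q : ℕ) (hq : 1 ≤ q)
    (b1 γ ρ : ℝ) (hb1 : 0 < b1) (hγ0 : 0 < γ) (hγ1 : γ < 1)
    (hρ1 : ρ < 1) (hρ2 : -1 / (2 * (q : ℝ) - 1) < ρ)
    (hden : 1 - ρ + ρ * q - γ * ρ * q ≠ 0)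
    (SNR : ℝ → ℝ)
    (hSNR : ∀ ν, SNR ν = b1 ^ 2 * q * (1 + ν * γ) ^ 2 /
      ((1 - ρ) * (1 + ν ^ 2) + ρ * q * (1 + ν) ^ 2)) :
    (∀ ν, SNR ν ≤ SNR ((γ * (1 - ρ + ρ * q) - ρ * q) / (1 - ρ + ρ * q - γ * ρ * q))) ∧
    SNR (-1 / γ) = 0 ∧ (∀ ν, 0 ≤ SNR ν) := by
  have hq' : (1:ℝ) ≤ (q:ℝ) := by exact_mod_cast hq
  have hq0 : (0:ℝ) < (q:ℝ) := by linarith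
  -- A = 1 - ρ + ρq, B = ρq
  have hABm : (0:ℝ) < (1 - ρ + ρ * q) - ρ * q := by linarith
  have h2q : (0:ℝ) < 2 * (q:ℝ) - 1 := by linarith
  have hρ2' : -1 < ρ * (2 * (q:ℝ) - 1) := by
    have := (div_lt_iff₀ h2q).mp hρ2
    linarith
  have hABp : (0:ℝ) < (1 - ρ + ρ * q) + ρ * q := by nlinarith
  have hA : (0:ℝ) < 1 - ρ + ρ * q := by linarith
  have hDpos : ∀ ν : ℝ, 0 < (1 - ρ) * (1 + ν ^ 2) + ρ * q * (1 + ν) ^ 2 := by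
    intro ν
    nlinarith [sq_nonneg ((1 - ρ + ρ * q) * ν + ρ * q), mul_pos hABm hABp,
      sq_nonneg (ν - 1), sq_nonneg (ν + 1), mul_nonneg hABm.le (sq_nonneg (ν - 1)),
      mul_nonneg hABp.le (sq_nonneg (ν + 1))]
  -- K = A(1+γ²) - 2γB > 0
  have hK : (0:ℝ) < (1 - ρ + ρ * q) * (1 + γ ^ 2) - 2 * γ * (ρ * q) := by
    nlinarith [mul_nonneg hA.le (sq_nonneg (1 - γ)), mul_pos hγ0 hABm]
  have hnonneg : ∀ ν, 0 ≤ SNR ν := by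
    intro ν
    rw [hSNR]
    apply div_nonneg _ (hDpos ν).le
    positivity
  have hzero : SNR (-1 / γ) = 0 := by
    rw [hSNR]
    have : (1 + (-1 / γ) * γ) = 0 := by field_simp; norm_num
    rw [this]
    simp
  -- The max value M
  have hMpos : (0:ℝ) < ((1 - ρ + ρ * q) - ρ * q) * ((1 - ρ + ρ * q) + ρ * q) :=
    mul_pos hABm hABp
  have hle : ∀ ν : ℝ, SNR ν ≤ b1 ^ 2 * q * ((1 - ρ + ρ * q) * (1 + γ ^ 2) - 2 * γ * (ρ * q)) /
      (((1 - ρ + ρ * q) - ρ * q) * ((1 - ρ + ρ * q) + ρ * q)) := by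
    intro ν
    rw [hSNR, div_le_div_iff₀ (hDpos ν) hMpos]
    nlinarith [mul_nonneg (mul_nonneg (sq_nonneg b1) hq0.le)
      (sq_nonneg (((1 - ρ + ρ * q) - γ * (ρ * q)) * ν - (γ * (1 - ρ + ρ * q) - ρ * q)))]
  have hval : SNR ((γ * (1 - ρ + ρ * q) - ρ * q) / (1 - ρ + ρ * q - γ * ρ * q)) =
      b1 ^ 2 * q * ((1 - ρ + ρ * q) * (1 + γ ^ 2) - 2 * γ * (ρ * q)) /
      (((1 - ρ + ρ * q) - ρ * q) * ((1 - ρ + ρ * q) + ρ * q)) := by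
    rw [hSNR, div_eq_div_iff (hDpos _).ne' hMpos.ne']
    obtain ⟨D, hD⟩ : ∃ D, D = 1 - ρ + ρ * q - γ * ρ * q := ⟨_, rfl⟩
    rw [← hD]
    rw [← hD] at hden
    field_simp
    rw [hD]
    ring
  refine ⟨fun ν => ?_, hzero, hnonneg⟩
  rw [hval]
  exact hle ν
end

section
/- As q → ∞, the maximal SNR in the two-group model satisfies SNR(w_MAF) ~ q·b₁²(1−γ)²/(2(1−ρ)); in particular max_ν SNR(ν) grows linearly in q and the optimal ratio ν_MAF tends to −1. -/
open Filter Topology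

/-- as q → ∞, SNR(ν_MAF(q)) ~ q·b₁²(1−γ)²/(2(1−ρ)) (so the
maximal SNR grows linearly in q) and ν_MAF(q) → −1. -/
theorem two_group_snr_asymptotics
    (b1 γ ρ : ℝ) (hb1 : 0 < b1) (hγ0 : 0 < γ) (hγ1 : γ < 1)
    (hρ0 : 0 < ρ) (hρ1 : ρ < 1)
    (SNR : ℕ → ℝ → ℝ)
    (hSNR : ∀ (q : ℕ) (ν : ℝ), SNR q ν = b1 ^ 2 * q * (1 + ν * γ) ^ 2 /
      ((1 - ρ) * (1 + ν ^ 2) + ρ * q * (1 + ν) ^ 2))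
    (νMAF : ℕ → ℝ)
    (hν : ∀ q : ℕ, νMAF q =
      (γ * (1 - ρ + ρ * q) - ρ * q) / (1 - ρ + ρ * q - γ * ρ * q)) :
    Tendsto (fun q : ℕ =>
        SNR q (νMAF q) / ((q : ℝ) * b1 ^ 2 * (1 - γ) ^ 2 / (2 * (1 - ρ))))
      atTop (nhds 1) ∧
    Tendsto νMAF atTop (nhds (-1)) := by
  have hρ1' : (0:ℝ) < 1 - ρ := by linarith
  have hγ1' : (0:ℝ) < 1 - γ := by linarith
  -- denominator d q
  set d : ℕ → ℝ := fun q => 1 - ρ + ρ * q - γ * ρ * q with hd_def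
  have hd : ∀ q : ℕ, 0 < d q := by
    intro q
    have hq : (0:ℝ) ≤ (q:ℝ) := Nat.cast_nonneg q
    have : d q = (1 - ρ) + (1 - γ) * ρ * q := by simp [hd_def]; ring
    rw [this]
    have : 0 ≤ (1 - γ) * ρ * q := by positivity
    linarith
  -- inverse of cast tends to 0
  have hinv : Tendsto (fun q : ℕ => ((q:ℝ))⁻¹) atTop (nhds 0) :=
    tendsto_inv_atTop_zero.comp tendsto_natCast_atTop_atTop
  have hqpos : ∀ᶠ q : ℕ in atTop, (0:ℝ) < (q:ℝ) := by
    filter_upwards [eventually_ge_atTop 1] with q hq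
    exact_mod_cast Nat.lt_of_lt_of_le Nat.zero_lt_one hq
  -- limit of νMAF
  have hA : Tendsto νMAF atTop (nhds (-1)) := by
    have hnum : Tendsto (fun q : ℕ => γ * (1 - ρ) * ((q:ℝ))⁻¹ + (γ - 1) * ρ)
        atTop (nhds ((γ - 1) * ρ)) := by
      have := (hinv.const_mul (γ * (1 - ρ))).add_const ((γ - 1) * ρ)
      simpa using this
    have hden : Tendsto (fun q : ℕ => (1 - ρ) * ((q:ℝ))⁻¹ + (1 - γ) * ρ)
        atTop (nhds ((1 - γ) * ρ)) := by
      have := (hinv.const_mul (1 - ρ)).add_const ((1 - γ) * ρ)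
      simpa using this
    have hden_ne : ((1:ℝ) - γ) * ρ ≠ 0 := by positivity
    have hdiv := hnum.div hden hden_ne
    have heq : (fun q : ℕ => (γ * (1 - ρ) * ((q:ℝ))⁻¹ + (γ - 1) * ρ) /
        ((1 - ρ) * ((q:ℝ))⁻¹ + (1 - γ) * ρ)) =ᶠ[atTop] νMAF := by
      filter_upwards [hqpos] with q hq
      rw [hν]
      have hdq := (hd q).ne'
      have hdq' : 1 - ρ + ρ * q - γ * ρ * q ≠ 0 := by simpa [hd_def] using hdq
      field_simp
      ring
    have hval : ((γ - 1) * ρ) / ((1 - γ) * ρ) = -1 := by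
      field_simp
      ring
    rw [hval] at hdiv
    exact hdiv.congr' heq
  refine ⟨?_, hA⟩
  -- 1 + νMAF q = (1-ρ)(1+γ)/d q
  have h1ν : ∀ q : ℕ, 1 + νMAF q = (1 - ρ) * (1 + γ) / d q := by
    intro q
    have hdq := (hd q).ne'
    rw [hν]
    rw [eq_div_iff hdq]
    have hdq' : 1 - ρ + ρ * q - γ * ρ * q ≠ 0 := by simpa [hd_def] using hdq
    field_simp [hd_def]
    ring
  -- q / d q tends to ((1-γ)ρ)⁻¹
  have hqd : Tendsto (fun q : ℕ => (q:ℝ) / d q) atTop (nhds (((1 - γ) * ρ)⁻¹)) := by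
    have hden : Tendsto (fun q : ℕ => d q / (q:ℝ)) atTop (nhds ((1 - γ) * ρ)) := by
      have h1 : Tendsto (fun q : ℕ => (1 - ρ) * ((q:ℝ))⁻¹ + (1 - γ) * ρ)
          atTop (nhds ((1 - γ) * ρ)) := by
        have := (hinv.const_mul (1 - ρ)).add_const ((1 - γ) * ρ)
        simpa using this
      refine h1.congr' ?_
      filter_upwards [hqpos] with q hq
      have hq' : (q:ℝ) ≠ 0 := hq.ne'
      field_simp [hd_def]
      ring
    have := hden.inv₀ (by positivity)
    refine this.congr' ?_
    filter_upwards [hqpos] with q hq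
    rw [inv_div]
  -- g q := q (1+ν)² → 0
  have hB : Tendsto (fun q : ℕ => (q:ℝ) * (1 + νMAF q) ^ 2) atTop (nhds 0) := by
    have h0 : Tendsto (fun q : ℕ => ((1 - ρ) * (1 + γ)) ^ 2 * (((q:ℝ))⁻¹ * ((q:ℝ) / d q) ^ 2))
        atTop (nhds (((1 - ρ) * (1 + γ)) ^ 2 * (0 * (((1 - γ) * ρ)⁻¹) ^ 2))) :=
      Tendsto.const_mul _ (hinv.mul (hqd.pow 2))
    simp only [zero_mul, mul_zero] at h0
    refine h0.congr' ?_
    filter_upwards [hqpos] with q hq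
    have hq' : (q:ℝ) ≠ 0 := hq.ne'
    have hdq := (hd q).ne'
    rw [h1ν q]
    field_simp
  -- numerator (1+νγ)² → (1-γ)²
  have hC : Tendsto (fun q : ℕ => (1 + νMAF q * γ) ^ 2) atTop (nhds ((1 - γ) ^ 2)) := by
    have := ((tendsto_const_nhds.add (hA.mul_const γ)).pow 2 :
      Tendsto (fun q : ℕ => (1 + νMAF q * γ) ^ 2) atTop (nhds ((1 + (-1) * γ) ^ 2)))
    convert this using 2
    ring
  -- denominator → 2(1-ρ)
  have hD : Tendsto (fun q : ℕ =>
      (1 - ρ) * (1 + (νMAF q) ^ 2) + ρ * ((q:ℝ) * (1 + νMAF q) ^ 2))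
      atTop (nhds (2 * (1 - ρ))) := by
    have h1 : Tendsto (fun q : ℕ => (1 - ρ) * (1 + (νMAF q) ^ 2))
        atTop (nhds ((1 - ρ) * (1 + (-1:ℝ) ^ 2))) :=
      Tendsto.const_mul _ (tendsto_const_nhds.add (hA.pow 2))
    have h2 := (hB.const_mul ρ)
    have := h1.add h2
    convert this using 2 <;> ring
  -- final limit
  have hCpos : (0:ℝ) < b1 ^ 2 * (1 - γ) ^ 2 / (2 * (1 - ρ)) := by positivity
  have hfin : Tendsto (fun q : ℕ =>
      (b1 ^ 2 * (1 + νMAF q * γ) ^ 2 /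
        ((1 - ρ) * (1 + (νMAF q) ^ 2) + ρ * ((q:ℝ) * (1 + νMAF q) ^ 2))) /
      (b1 ^ 2 * (1 - γ) ^ 2 / (2 * (1 - ρ))))
      atTop (nhds 1) := by
    have hnum : Tendsto (fun q : ℕ => b1 ^ 2 * (1 + νMAF q * γ) ^ 2)
        atTop (nhds (b1 ^ 2 * (1 - γ) ^ 2)) := Tendsto.const_mul _ hC
    have h2 : (2:ℝ) * (1 - ρ) ≠ 0 := by positivity
    have := (hnum.div hD h2).div_const (b1 ^ 2 * (1 - γ) ^ 2 / (2 * (1 - ρ)))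
    convert this using 2
    · rfl
    · exact (div_self hCpos.ne').symm
  refine hfin.congr' ?_
  filter_upwards [hqpos] with q hq
  have hq' : (q:ℝ) ≠ 0 := hq.ne'
  rw [hSNR]
  have hDpos : 0 < (1 - ρ) * (1 + (νMAF q) ^ 2) + ρ * (q:ℝ) * (1 + νMAF q) ^ 2 := by
    nlinarith [sq_nonneg (νMAF q), sq_nonneg (1 + νMAF q), Nat.cast_nonneg (α := ℝ) q,
      mul_nonneg (mul_nonneg hρ0.le (Nat.cast_nonneg (α := ℝ) q)) (sq_nonneg (1 + νMAF q))]
  have hDne := hDpos.ne'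
  have hb1' : b1 ^ 2 ≠ 0 := by positivity
  have hγ' : (1 - γ) ^ 2 ≠ 0 := by positivity
  have h2 : (2:ℝ) * (1 - ρ) ≠ 0 := by positivity
  field_simp
end

section
/- Under the constraint w₁² + w₂² = 1, the quantity (q w₁ b₁ + q w₂ b₂)² + (1−ρ) + ρ(q w₁ + q w₂)² is maximized when w₂/w₁ = √(α²+1) − α with α = (b₁² − b₂²)/(2(b₁b₂ + ρ)). -/
/-- under w₁² + w₂² = 1, the PCA objective
(qw₁b₁ + qw₂b₂)² + (1−ρ) + ρ(qw₁ + qw₂)² is maximized when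
w₂/w₁ = √(α²+1) − α with α = (b₁² − b₂²)/(2(b₁b₂ + ρ)). -/
theorem two_group_pca_ratio (q : ℕ) (hq : 1 ≤ q)
    (b1 b2 ρ : ℝ) (hb : b1 > b2) (hb2 : b2 > 0)
    (hρ1 : ρ < 1) (hρ2 : -1 / (2 * (q : ℝ) - 1) < ρ) (hbρ : b1 * b2 + ρ > 0)
    (g : ℝ → ℝ → ℝ)
    (hg : ∀ w1 w2, g w1 w2 =
      ((q : ℝ) * w1 * b1 + (q : ℝ) * w2 * b2) ^ 2 + (1 - ρ) +
        ρ * ((q : ℝ) * w1 + (q : ℝ) * w2) ^ 2) :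
    ∀ w1 w2 : ℝ, w1 ^ 2 + w2 ^ 2 = 1 →
      (∀ u1 u2 : ℝ, u1 ^ 2 + u2 ^ 2 = 1 → g u1 u2 ≤ g w1 w2) →
      w1 ≠ 0 ∧
        w2 / w1 =
          Real.sqrt (((b1 ^ 2 - b2 ^ 2) / (2 * (b1 * b2 + ρ))) ^ 2 + 1) -
            (b1 ^ 2 - b2 ^ 2) / (2 * (b1 * b2 + ρ)) := by
  intro w1 w2 hw hmax
  have hC : 0 < b1 * b2 + ρ := hbρ
  have hDpos : 0 < b1 ^ 2 - b2 ^ 2 := by nlinarith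
  have hq2 : (0:ℝ) < (q:ℝ) ^ 2 := by
    have : (1:ℝ) ≤ (q:ℝ) := by exact_mod_cast hq
    nlinarith
  obtain ⟨R, hRdef⟩ : ∃ R : ℝ, R = Real.sqrt (((b1 ^ 2 - b2 ^ 2) / 2) ^ 2 + (b1 * b2 + ρ) ^ 2) :=
    ⟨_, rfl⟩
  have hR2 : R ^ 2 = ((b1 ^ 2 - b2 ^ 2) / 2) ^ 2 + (b1 * b2 + ρ) ^ 2 := by
    rw [hRdef]; exact Real.sq_sqrt (by positivity)
  have hRnn : 0 ≤ R := hRdef ▸ Real.sqrt_nonneg _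
  have hRD : (b1 ^ 2 - b2 ^ 2) / 2 < R := by nlinarith
  obtain ⟨s, hsdef⟩ : ∃ s : ℝ, s = R - (b1 ^ 2 - b2 ^ 2) / 2 := ⟨_, rfl⟩
  have hs : 0 < s := by simp only [hsdef]; linarith
  have hkey : s ^ 2 + (b1 ^ 2 - b2 ^ 2) * s = (b1 * b2 + ρ) ^ 2 := by
    simp only [hsdef]; linear_combination hR2
  have key : ∀ u1 u2 : ℝ, u1 ^ 2 + u2 ^ 2 = 1 →
      s * g u1 u2 + (q:ℝ) ^ 2 * (s * u1 - (b1 * b2 + ρ) * u2) ^ 2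
        = s * ((q:ℝ) ^ 2 * (b1 ^ 2 + ρ + s) + (1 - ρ)) := by
    intro u1 u2 hu
    rw [hg]
    linear_combination ((q:ℝ) ^ 2 * s * (b1 ^ 2 + ρ + s)) * hu - ((q:ℝ) ^ 2 * u2 ^ 2) * hkey
  -- the eigenvector point
  obtain ⟨N, hNdef⟩ : ∃ N : ℝ, N = Real.sqrt ((b1 * b2 + ρ) ^ 2 + s ^ 2) := ⟨_, rfl⟩
  have hN2 : N ^ 2 = (b1 * b2 + ρ) ^ 2 + s ^ 2 := by
    rw [hNdef]; exact Real.sq_sqrt (by positivity)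
  have hN : 0 < N := by rw [hNdef]; exact Real.sqrt_pos.mpr (by positivity)
  have hu1 : ((b1 * b2 + ρ) / N) ^ 2 + (s / N) ^ 2 = 1 := by
    field_simp
    linear_combination -hN2
  have hzero : s * ((b1 * b2 + ρ) / N) - (b1 * b2 + ρ) * (s / N) = 0 := by ring
  have h2 := key _ _ hu1
  rw [hzero] at h2
  have hgu : g ((b1 * b2 + ρ) / N) (s / N) = (q:ℝ) ^ 2 * (b1 ^ 2 + ρ + s) + (1 - ρ) := by
    norm_num at h2
    rcases h2 with h | h
    · exact h
    · exact absurd h hs.ne'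
  have hge : (q:ℝ) ^ 2 * (b1 ^ 2 + ρ + s) + (1 - ρ) ≤ g w1 w2 := by
    rw [← hgu]; exact hmax _ _ hu1
  have h1 := key w1 w2 hw
  have hhint : s * ((q:ℝ) ^ 2 * (b1 ^ 2 + ρ + s) + (1 - ρ)) ≤ s * g w1 w2 :=
    mul_le_mul_of_nonneg_left hge hs.le
  have hsqle : (q:ℝ) ^ 2 * (s * w1 - (b1 * b2 + ρ) * w2) ^ 2 ≤ 0 := by
    linarith [h1, hhint]
  have hsq0 : (s * w1 - (b1 * b2 + ρ) * w2) ^ 2 = 0 := by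
    have h0 := sq_nonneg (s * w1 - (b1 * b2 + ρ) * w2)
    have h' : (q:ℝ) ^ 2 * (s * w1 - (b1 * b2 + ρ) * w2) ^ 2 ≤ (q:ℝ) ^ 2 * 0 := by
      simpa using hsqle
    exact le_antisymm (le_of_mul_le_mul_left h' hq2) h0
  have heq : s * w1 = (b1 * b2 + ρ) * w2 := by
    have := pow_eq_zero_iff (n := 2) (by norm_num) |>.mp hsq0
    linarith [this]
  have hw1 : w1 ≠ 0 := by
    intro h
    have hw2 : w2 = 0 := by
      have : (b1 * b2 + ρ) * w2 = 0 := by rw [← heq, h]; ring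
      rcases mul_eq_zero.mp this with h' | h'
      · exact absurd h' hC.ne'
      · exact h'
    rw [h, hw2] at hw
    norm_num at hw
  refine ⟨hw1, ?_⟩
  have hsqrt : Real.sqrt (((b1 ^ 2 - b2 ^ 2) / (2 * (b1 * b2 + ρ))) ^ 2 + 1)
      = R / (b1 * b2 + ρ) := by
    rw [show ((b1 ^ 2 - b2 ^ 2) / (2 * (b1 * b2 + ρ))) ^ 2 + 1
        = (R / (b1 * b2 + ρ)) ^ 2 by
      field_simp
      linear_combination (-(4:ℝ)) * hR2]
    exact Real.sqrt_sq (by positivity)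
  have hratio : w2 / w1 = s / (b1 * b2 + ρ) := by
    rw [div_eq_div_iff hw1 hC.ne']
    linarith [heq]
  rw [hsqrt, hratio, hsdef]
  field_simp
end

section
/- Let Σ_Z = bb' + ρ1_p1_p' + (1−ρ)I with b̄ = (1/p)Σb_i ≠ 0 and ρ ≠ 0. Then the vectors v₁ = ((ρp − |b|² + Δ)/(2b̄p))1_p + b and v₂ = ((ρp − |b|² − Δ)/(2b̄p))1_p + b, where Δ² = (|b|² − ρp)² + 4(b̄p)²ρ, are eigenvectors of Σ_Z with eigenvalues (ρp + |b|² ± Δ)/2 + 1 − ρ respectively. -/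
open Matrix

lemma spiked_aux {p : ℕ} (b : Fin p → ℝ) (ρ c lam : ℝ)
    (h1 : c * (∑ i, b i) + b ⬝ᵥ b + (1 - ρ) = lam)
    (h2 : ρ * (c * p + ∑ i, b i) + (1 - ρ) * c = lam * c) :
    (Matrix.vecMulVec b b +
        ρ • Matrix.vecMulVec (fun _ : Fin p => (1 : ℝ)) (fun _ => 1) +
        (1 - ρ) • (1 : Matrix (Fin p) (Fin p) ℝ)) *ᵥ
      (c • (fun _ => (1 : ℝ)) + b) = lam • (c • (fun _ => (1 : ℝ)) + b) := by
  funext i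
  simp only [mulVec, dotProduct, Pi.add_apply, Pi.smul_apply, smul_eq_mul,
    Matrix.add_apply, Matrix.smul_apply, vecMulVec_apply, Matrix.one_apply, mul_one]
  simp only [add_mul, mul_add, Finset.sum_add_distrib, mul_ite, ite_mul, mul_zero, zero_mul,
    Finset.sum_ite_eq, Finset.mem_univ, if_true, Finset.mul_sum, Finset.sum_const,
    Finset.card_fin, nsmul_eq_mul, mul_one, one_mul]
  have e1 : (∑ x, b i * b x * c) = (b i * c) * ∑ x, b x := by
    rw [Finset.mul_sum]; exact Finset.sum_congr rfl fun x _ => by ring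
  have e2 : (∑ x, b i * b x * b x) = b i * (b ⬝ᵥ b) := by
    rw [dotProduct, Finset.mul_sum]
    exact Finset.sum_congr rfl fun x _ => by ring
  have e3 : (∑ x, ρ * b x) = ρ * ∑ x, b x := by rw [Finset.mul_sum]
  ring_nf
  ring_nf at e1 e2 e3
  rw [e1, e2, e3]
  linear_combination b i * h1 + h2

/-- for Σ_Z = bb' + ρ11' + (1−ρ)I with b̄ ≠ 0, ρ ≠ 0,
the vectors v_± = ((ρp − |b|² ± Δ)/(2b̄p))1 + b, where
Δ² = (|b|² − ρp)² + 4(b̄p)²ρ, are eigenvectors with eigenvalues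
(ρp + |b|² ± Δ)/2 + 1 − ρ. -/
theorem spiked_equicorrelation_general_eigenvectors {p : ℕ}
    (b : Fin p → ℝ) (ρ : ℝ) (hρ0 : ρ ≠ 0)
    (hρ1 : ρ < 1) (hρ2 : -1 / ((p : ℝ) - 1) < ρ)
    (bbar : ℝ) (hbar : bbar = (1 / (p : ℝ)) * ∑ i, b i) (hbar0 : bbar ≠ 0)
    (Δ : ℝ) (hΔ0 : 0 ≤ Δ)
    (hΔ : Δ ^ 2 = (b ⬝ᵥ b - ρ * p) ^ 2 + 4 * (bbar * p) ^ 2 * ρ)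
    (SZ : Matrix (Fin p) (Fin p) ℝ)
    (hSig : SZ = Matrix.vecMulVec b b +
        ρ • Matrix.vecMulVec (fun _ : Fin p => (1 : ℝ)) (fun _ => 1) +
        (1 - ρ) • (1 : Matrix (Fin p) (Fin p) ℝ)) :
    SZ *ᵥ (((ρ * p - b ⬝ᵥ b + Δ) / (2 * bbar * p)) • (fun _ => (1 : ℝ)) + b) =
      ((ρ * p + b ⬝ᵥ b + Δ) / 2 + 1 - ρ) •
        (((ρ * p - b ⬝ᵥ b + Δ) / (2 * bbar * p)) • (fun _ => (1 : ℝ)) + b) ∧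
    SZ *ᵥ (((ρ * p - b ⬝ᵥ b - Δ) / (2 * bbar * p)) • (fun _ => (1 : ℝ)) + b) =
      ((ρ * p + b ⬝ᵥ b - Δ) / 2 + 1 - ρ) •
        (((ρ * p - b ⬝ᵥ b - Δ) / (2 * bbar * p)) • (fun _ => (1 : ℝ)) + b) := by
  subst hSig
  have hp : (p : ℝ) ≠ 0 := by
    intro h
    apply hbar0
    rw [hbar, h]
    simp
  have hS : (∑ i, b i) = bbar * p := by
    rw [hbar]; field_simp
  constructor
  · have := spiked_aux b ρ ((ρ * p - b ⬝ᵥ b + Δ) / (2 * bbar * p))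
      ((ρ * p + b ⬝ᵥ b + Δ) / 2 + 1 - ρ) ?_ ?_
    · convert this using 2 <;> ring
    · rw [hS]; field_simp; ring
    · rw [hS]; field_simp; linear_combination (-1 : ℝ) * hΔ
  · have := spiked_aux b ρ ((ρ * p - b ⬝ᵥ b - Δ) / (2 * bbar * p))
      ((ρ * p + b ⬝ᵥ b - Δ) / 2 + 1 - ρ) ?_ ?_
    · convert this using 2 <;> ring
    · rw [hS]; field_simp; ring
    · rw [hS]; field_simp; linear_combination (-1 : ℝ) * hΔ
end
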